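/- arXiv:2112.14962 — 2 statements merged into one kernel-verified Lean document; each statement's English description precedes it below -/
import Mathlib

section
/- For every formula F of multiplicative linear logic with units (built from atoms, dual atoms, ⊗, ⅋, 1, ⊥ and containing no occurrence of ∘, ! or ?), F is provable in the sequent system MLLu if and only if F is provable in the sequent system MLLu^j. -/
/-! # Formulas of multiplicative exponential linear logic with the placeholder `∘` -/

inductive Formula where
  | atom  : ℕ → Formula
  | natom : ℕ → Formula
  | parr  : Formula → Formula → Formula
  | tens  : Formula → Formula → Formula
  | bang  : Formula → Formula
  | quest : Formula → Formula
  | bot   : Formula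
  | one   : Formula
  | hole  : Formula
  deriving DecidableEq

namespace Formula

/-- A MELL-formula: a formula with no occurrence of the placeholder `∘`. -/
def isMELL : Formula → Prop
  | atom _   => True
  | natom _  => True
  | parr A B => isMELL A ∧ isMELL B
  | tens A B => isMELL A ∧ isMELL B
  | bang A   => isMELL A
  | quest A  => isMELL A
  | bot      => True
  | one      => True
  | hole     => False

/-- A formula without modalities (no `!` and no `?`). -/
def noMod : Formula → Prop
  | atom _   => True
  | natom _  => True
  | parr A B => noMod A ∧ noMod B
  | tens A B => noMod A ∧ noMod B
  | bang _   => False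
  | quest _  => False
  | bot      => True
  | one      => True
  | hole     => True

/-- A formula of multiplicative linear logic with units:
built from atoms, dual atoms, `⊗`, `⅋`, `1`, `⊥`; no `∘`, `!`, `?`. -/
def isMLLu : Formula → Prop
  | atom _   => True
  | natom _  => True
  | parr A B => isMLLu A ∧ isMLLu B
  | tens A B => isMLLu A ∧ isMLLu B
  | bang _   => False
  | quest _  => False
  | bot      => True
  | one      => True
  | hole     => False

/-- Linear negation, defined through the De Morgan laws. -/
def dual : Formula → Formula
  | atom a   => natom a
  | natom a  => atom a
  | parr A B => tens (dual A) (dual B)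
  | tens A B => parr (dual A) (dual B)
  | bang A   => quest (dual A)
  | quest A  => bang (dual A)
  | bot      => one
  | one      => bot
  | hole     => hole

/-- `questN n F` is `?ⁿ F`. -/
def questN : ℕ → Formula → Formula
  | 0,     A => A
  | n + 1, A => quest (questN n A)

/-- A weaken-contradiction: a formula `?ⁿ(A ⊗ Ā)` with `A` a MELL-formula. -/
def isWeakenContradiction (C : Formula) : Prop :=
  ∃ (n : ℕ) (A : Formula), A.isMELL ∧ C = questN n (tens A (dual A))

end Formula

/-- A sequent is a (non-empty) multiset of formulas. -/
abbrev Sequent := Multiset Formula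

/-! ## Sequent systems -/

/-- The system MLL = {ax, ⊗, ⅋} (it coincides with the linear system MLLˡ). -/
inductive ProvMLL : Sequent → Prop
  | ax (a : ℕ) : ProvMLL {Formula.atom a, Formula.natom a}
  | parr (Γ : Sequent) (A B : Formula) :
      ProvMLL (A ::ₘ B ::ₘ Γ) → ProvMLL (Formula.parr A B ::ₘ Γ)
  | tens (Γ Δ : Sequent) (A B : Formula) :
      ProvMLL (A ::ₘ Γ) → ProvMLL (B ::ₘ Δ) →
      ProvMLL (Formula.tens A B ::ₘ (Γ + Δ))

/-- The system MLLu = {ax, ⊗, ⅋, ⊥, 1}. -/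
inductive ProvMLLu : Sequent → Prop
  | ax (a : ℕ) : ProvMLLu {Formula.atom a, Formula.natom a}
  | parr (Γ : Sequent) (A B : Formula) :
      ProvMLLu (A ::ₘ B ::ₘ Γ) → ProvMLLu (Formula.parr A B ::ₘ Γ)
  | tens (Γ Δ : Sequent) (A B : Formula) :
      ProvMLLu (A ::ₘ Γ) → ProvMLLu (B ::ₘ Δ) →
      ProvMLLu (Formula.tens A B ::ₘ (Γ + Δ))
  | bot (Γ : Sequent) : ProvMLLu Γ → ProvMLLu (Formula.bot ::ₘ Γ)
  | one : ProvMLLu {Formula.one}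

/-- The system MELL = {ax, ⊗, ⅋, ⊥, 1, !p, der, w?, c?}. -/
inductive ProvMELL : Sequent → Prop
  | ax (a : ℕ) : ProvMELL {Formula.atom a, Formula.natom a}
  | parr (Γ : Sequent) (A B : Formula) :
      ProvMELL (A ::ₘ B ::ₘ Γ) → ProvMELL (Formula.parr A B ::ₘ Γ)
  | tens (Γ Δ : Sequent) (A B : Formula) :
      ProvMELL (A ::ₘ Γ) → ProvMELL (B ::ₘ Δ) →
      ProvMELL (Formula.tens A B ::ₘ (Γ + Δ))
  | bot (Γ : Sequent) : ProvMELL Γ → ProvMELL (Formula.bot ::ₘ Γ)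
  | one : ProvMELL {Formula.one}
  | prom (Γ : Sequent) (A : Formula) :
      ProvMELL (A ::ₘ Γ.map Formula.quest) →
      ProvMELL (Formula.bang A ::ₘ Γ.map Formula.quest)
  | der (Γ : Sequent) (A : Formula) :
      ProvMELL (A ::ₘ Γ) → ProvMELL (Formula.quest A ::ₘ Γ)
  | weak (Γ : Sequent) (A : Formula) :
      ProvMELL Γ → ProvMELL (Formula.quest A ::ₘ Γ)
  | contr (Γ : Sequent) (A : Formula) :
      ProvMELL (Formula.quest A ::ₘ Formula.quest A ::ₘ Γ) →
      ProvMELL (Formula.quest A ::ₘ Γ)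

/-- The system MLLu^j = {ax_j, 1_j, ⊥^j, ⅋, ⊗}. -/
inductive ProvMLLuj : Sequent → Prop
  | axj (a n : ℕ) :
      ProvMLLuj (Formula.atom a ::ₘ Formula.natom a ::ₘ Multiset.replicate n Formula.hole)
  | onej (n : ℕ) : ProvMLLuj (Formula.one ::ₘ Multiset.replicate n Formula.hole)
  | botj (Γ : Sequent) :
      ProvMLLuj (Formula.hole ::ₘ Γ) → ProvMLLuj (Formula.bot ::ₘ Γ)
  | parr (Γ : Sequent) (A B : Formula) :
      ProvMLLuj (A ::ₘ B ::ₘ Γ) → ProvMLLuj (Formula.parr A B ::ₘ Γ)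
  | tens (Γ Δ : Sequent) (A B : Formula) :
      ProvMLLuj (A ::ₘ Γ) → ProvMLLuj (B ::ₘ Δ) →
      ProvMLLuj (Formula.tens A B ::ₘ (Γ + Δ))

/-- The system MELL^j = {ax_j, 1_j, ⊥^j, w^j, ⅋, ⊗, w!p, der, dig?, dig∘, c?}. -/
inductive ProvMELLj : Sequent → Prop
  | axj (a n : ℕ) :
      ProvMELLj (Formula.atom a ::ₘ Formula.natom a ::ₘ Multiset.replicate n Formula.hole)
  | onej (n : ℕ) : ProvMELLj (Formula.one ::ₘ Multiset.replicate n Formula.hole)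
  | botj (Γ : Sequent) :
      ProvMELLj (Formula.hole ::ₘ Γ) → ProvMELLj (Formula.bot ::ₘ Γ)
  | wj (Γ : Sequent) (A : Formula) :
      ProvMELLj (Formula.hole ::ₘ Γ) → ProvMELLj (Formula.quest A ::ₘ Γ)
  | parr (Γ : Sequent) (A B : Formula) :
      ProvMELLj (A ::ₘ B ::ₘ Γ) → ProvMELLj (Formula.parr A B ::ₘ Γ)
  | tens (Γ Δ : Sequent) (A B : Formula) :
      ProvMELLj (A ::ₘ Γ) → ProvMELLj (B ::ₘ Δ) →
      ProvMELLj (Formula.tens A B ::ₘ (Γ + Δ))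
  | wprom (Γ : Sequent) (A : Formula) :
      ProvMELLj (A ::ₘ Γ) → ProvMELLj (Formula.bang A ::ₘ Γ.map Formula.quest)
  | der (Γ : Sequent) (A : Formula) :
      ProvMELLj (A ::ₘ Γ) → ProvMELLj (Formula.quest A ::ₘ Γ)
  | dig (Γ : Sequent) (A : Formula) :
      ProvMELLj (Formula.quest (Formula.quest A) ::ₘ Γ) →
      ProvMELLj (Formula.quest A ::ₘ Γ)
  | digo (Γ : Sequent) :
      ProvMELLj (Formula.quest Formula.hole ::ₘ Γ) → ProvMELLj (Formula.hole ::ₘ Γ)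
  | contr (Γ : Sequent) (A : Formula) :
      ProvMELLj (Formula.quest A ::ₘ Formula.quest A ::ₘ Γ) →
      ProvMELLj (Formula.quest A ::ₘ Γ)

/-- The system MELL^j extended with the cut rule (cut formulas are MELL-formulas). -/
inductive ProvMELLjCut : Sequent → Prop
  | axj (a n : ℕ) :
      ProvMELLjCut (Formula.atom a ::ₘ Formula.natom a ::ₘ Multiset.replicate n Formula.hole)
  | onej (n : ℕ) : ProvMELLjCut (Formula.one ::ₘ Multiset.replicate n Formula.hole)
  | botj (Γ : Sequent) :
      ProvMELLjCut (Formula.hole ::ₘ Γ) → ProvMELLjCut (Formula.bot ::ₘ Γ)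
  | wj (Γ : Sequent) (A : Formula) :
      ProvMELLjCut (Formula.hole ::ₘ Γ) → ProvMELLjCut (Formula.quest A ::ₘ Γ)
  | parr (Γ : Sequent) (A B : Formula) :
      ProvMELLjCut (A ::ₘ B ::ₘ Γ) → ProvMELLjCut (Formula.parr A B ::ₘ Γ)
  | tens (Γ Δ : Sequent) (A B : Formula) :
      ProvMELLjCut (A ::ₘ Γ) → ProvMELLjCut (B ::ₘ Δ) →
      ProvMELLjCut (Formula.tens A B ::ₘ (Γ + Δ))
  | wprom (Γ : Sequent) (A : Formula) :
      ProvMELLjCut (A ::ₘ Γ) → ProvMELLjCut (Formula.bang A ::ₘ Γ.map Formula.quest)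
  | der (Γ : Sequent) (A : Formula) :
      ProvMELLjCut (A ::ₘ Γ) → ProvMELLjCut (Formula.quest A ::ₘ Γ)
  | dig (Γ : Sequent) (A : Formula) :
      ProvMELLjCut (Formula.quest (Formula.quest A) ::ₘ Γ) →
      ProvMELLjCut (Formula.quest A ::ₘ Γ)
  | digo (Γ : Sequent) :
      ProvMELLjCut (Formula.quest Formula.hole ::ₘ Γ) → ProvMELLjCut (Formula.hole ::ₘ Γ)
  | contr (Γ : Sequent) (A : Formula) :
      ProvMELLjCut (Formula.quest A ::ₘ Formula.quest A ::ₘ Γ) →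
      ProvMELLjCut (Formula.quest A ::ₘ Γ)
  | cut (Γ Δ : Sequent) (A : Formula) :
      A.isMELL → ProvMELLjCut (A ::ₘ Γ) → ProvMELLjCut (A.dual ::ₘ Δ) →
      ProvMELLjCut (Γ + Δ)

/-- The linear system MLLu^ℓ = {ax_j, 1_j, ⅋, ⊗}. -/
inductive ProvMLLuLin : Sequent → Prop
  | axj (a n : ℕ) :
      ProvMLLuLin (Formula.atom a ::ₘ Formula.natom a ::ₘ Multiset.replicate n Formula.hole)
  | onej (n : ℕ) : ProvMLLuLin (Formula.one ::ₘ Multiset.replicate n Formula.hole)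
  | parr (Γ : Sequent) (A B : Formula) :
      ProvMLLuLin (A ::ₘ B ::ₘ Γ) → ProvMLLuLin (Formula.parr A B ::ₘ Γ)
  | tens (Γ Δ : Sequent) (A B : Formula) :
      ProvMLLuLin (A ::ₘ Γ) → ProvMLLuLin (B ::ₘ Δ) →
      ProvMLLuLin (Formula.tens A B ::ₘ (Γ + Δ))

/-- The linear system MELL^ℓ = {ax_j, 1_j, ⅋, ⊗, w!p}. -/
inductive ProvMELLLin : Sequent → Prop
  | axj (a n : ℕ) :
      ProvMELLLin (Formula.atom a ::ₘ Formula.natom a ::ₘ Multiset.replicate n Formula.hole)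
  | onej (n : ℕ) : ProvMELLLin (Formula.one ::ₘ Multiset.replicate n Formula.hole)
  | parr (Γ : Sequent) (A B : Formula) :
      ProvMELLLin (A ::ₘ B ::ₘ Γ) → ProvMELLLin (Formula.parr A B ::ₘ Γ)
  | tens (Γ Δ : Sequent) (A B : Formula) :
      ProvMELLLin (A ::ₘ Γ) → ProvMELLLin (B ::ₘ Δ) →
      ProvMELLLin (Formula.tens A B ::ₘ (Γ + Δ))
  | wprom (Γ : Sequent) (A : Formula) :
      ProvMELLLin (A ::ₘ Γ) → ProvMELLLin (Formula.bang A ::ₘ Γ.map Formula.quest)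

/-- MELL with the cut rule, recording the list of active cut formulas of the derivation. -/
inductive ProvMELLCutL : Sequent → List Formula → Prop
  | ax (a : ℕ) : ProvMELLCutL {Formula.atom a, Formula.natom a} []
  | parr (Γ : Sequent) (A B : Formula) (L : List Formula) :
      ProvMELLCutL (A ::ₘ B ::ₘ Γ) L → ProvMELLCutL (Formula.parr A B ::ₘ Γ) L
  | tens (Γ Δ : Sequent) (A B : Formula) (L₁ L₂ : List Formula) :
      ProvMELLCutL (A ::ₘ Γ) L₁ → ProvMELLCutL (B ::ₘ Δ) L₂ →
      ProvMELLCutL (Formula.tens A B ::ₘ (Γ + Δ)) (L₁ ++ L₂)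
  | bot (Γ : Sequent) (L : List Formula) :
      ProvMELLCutL Γ L → ProvMELLCutL (Formula.bot ::ₘ Γ) L
  | one : ProvMELLCutL {Formula.one} []
  | prom (Γ : Sequent) (A : Formula) (L : List Formula) :
      ProvMELLCutL (A ::ₘ Γ.map Formula.quest) L →
      ProvMELLCutL (Formula.bang A ::ₘ Γ.map Formula.quest) L
  | der (Γ : Sequent) (A : Formula) (L : List Formula) :
      ProvMELLCutL (A ::ₘ Γ) L → ProvMELLCutL (Formula.quest A ::ₘ Γ) L
  | weak (Γ : Sequent) (A : Formula) (L : List Formula) :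
      ProvMELLCutL Γ L → ProvMELLCutL (Formula.quest A ::ₘ Γ) L
  | contr (Γ : Sequent) (A : Formula) (L : List Formula) :
      ProvMELLCutL (Formula.quest A ::ₘ Formula.quest A ::ₘ Γ) L →
      ProvMELLCutL (Formula.quest A ::ₘ Γ) L
  | cut (Γ Δ : Sequent) (A : Formula) (L₁ L₂ : List Formula) :
      A.isMELL → ProvMELLCutL (A ::ₘ Γ) L₁ → ProvMELLCutL (A.dual ::ₘ Δ) L₂ →
      ProvMELLCutL (Γ + Δ) (A :: (L₁ ++ L₂))

/-! ## Deep inference rewriting -/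

/-- Closure of a rewrite relation under arbitrary formula contexts. -/
inductive Deep (r : Formula → Formula → Prop) : Formula → Formula → Prop
  | base {A B : Formula} : r A B → Deep r A B
  | parrL {A A' : Formula} (B : Formula) :
      Deep r A A' → Deep r (Formula.parr A B) (Formula.parr A' B)
  | parrR (A : Formula) {B B' : Formula} :
      Deep r B B' → Deep r (Formula.parr A B) (Formula.parr A B')
  | tensL {A A' : Formula} (B : Formula) :
      Deep r A A' → Deep r (Formula.tens A B) (Formula.tens A' B)
  | tensR (A : Formula) {B B' : Formula} :
      Deep r B B' → Deep r (Formula.tens A B) (Formula.tens A B')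
  | bang {A A' : Formula} : Deep r A A' → Deep r (Formula.bang A) (Formula.bang A')
  | quest {A A' : Formula} : Deep r A A' → Deep r (Formula.quest A) (Formula.quest A')

/-- Base steps of all the deep-MELL rules:
deep dereliction, deep digging, deep ∘-digging, deep ⊥, deep weakening, deep contraction. -/
inductive DeepMELLBase : Formula → Formula → Prop
  | der (A : Formula) : DeepMELLBase A (Formula.quest A)
  | dig (A : Formula) :
      DeepMELLBase (Formula.quest (Formula.quest A)) (Formula.quest A)
  | digHole : DeepMELLBase (Formula.quest Formula.hole) Formula.hole
  | bot : DeepMELLBase Formula.hole Formula.bot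
  | weak (A : Formula) : DeepMELLBase Formula.hole (Formula.quest A)
  | contr (A : Formula) :
      DeepMELLBase (Formula.parr (Formula.quest A) (Formula.quest A)) (Formula.quest A)

/-- Base steps of deep dereliction, deep digging and deep ∘-digging. -/
inductive DigBase : Formula → Formula → Prop
  | der (A : Formula) : DigBase A (Formula.quest A)
  | dig (A : Formula) : DigBase (Formula.quest (Formula.quest A)) (Formula.quest A)
  | digHole : DigBase (Formula.quest Formula.hole) Formula.hole

/-- Base steps of deep weakening and deep ⊥. -/
inductive WeakBase : Formula → Formula → Prop
  | bot : WeakBase Formula.hole Formula.bot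
  | weak (A : Formula) : WeakBase Formula.hole (Formula.quest A)

/-- Base step of deep contraction. -/
inductive ContrBase : Formula → Formula → Prop
  | contr (A : Formula) :
      ContrBase (Formula.parr (Formula.quest A) (Formula.quest A)) (Formula.quest A)

/-- Base steps of deep ⊥, deep weakening, deep ?-contraction, deep ∘-contraction,
and the deep associativity-commutativity rules. -/
inductive WCACBase : Formula → Formula → Prop
  | bot : WCACBase Formula.hole Formula.bot
  | weak (A : Formula) : WCACBase Formula.hole (Formula.quest A)
  | contr (A : Formula) :
      WCACBase (Formula.parr (Formula.quest A) (Formula.quest A)) (Formula.quest A)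
  | contrHole :
      WCACBase (Formula.parr Formula.hole Formula.hole) Formula.hole
  | tensAssoc (A B C : Formula) :
      WCACBase (Formula.tens (Formula.tens A B) C) (Formula.tens A (Formula.tens B C))
  | parrAssoc (A B C : Formula) :
      WCACBase (Formula.parr (Formula.parr A B) C) (Formula.parr A (Formula.parr B C))
  | tensComm (A B : Formula) : WCACBase (Formula.tens A B) (Formula.tens B A)
  | parrComm (A B : Formula) : WCACBase (Formula.parr A B) (Formula.parr B A)

/-- One deep rewriting step inside a sequent: rewrite one member of the multiset. -/
def SeqStep (r : Formula → Formula → Prop) (Γ Γ' : Sequent) : Prop :=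
  ∃ (A A' : Formula) (Δ : Sequent), Deep r A A' ∧ Γ = A ::ₘ Δ ∧ Γ' = A' ::ₘ Δ

/-- Derivability between sequents by a finite sequence of deep rewriting steps. -/
def SeqDeriv (r : Formula → Formula → Prop) : Sequent → Sequent → Prop :=
  Relation.ReflTransGen (SeqStep r)

/-- Derivability between formulas by a finite sequence of deep rewriting steps. -/
def FormDeriv (r : Formula → Formula → Prop) : Formula → Formula → Prop :=
  Relation.ReflTransGen (Deep r)

/-- Equivalence of formulas modulo associativity and commutativity of ⊗ and ⅋. -/
inductive ACEq : Formula → Formula → Prop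
  | refl (A : Formula) : ACEq A A
  | symm {A B : Formula} : ACEq A B → ACEq B A
  | trans {A B C : Formula} : ACEq A B → ACEq B C → ACEq A C
  | tensAssoc (A B C : Formula) :
      ACEq (Formula.tens (Formula.tens A B) C) (Formula.tens A (Formula.tens B C))
  | parrAssoc (A B C : Formula) :
      ACEq (Formula.parr (Formula.parr A B) C) (Formula.parr A (Formula.parr B C))
  | tensComm (A B : Formula) : ACEq (Formula.tens A B) (Formula.tens B A)
  | parrComm (A B : Formula) : ACEq (Formula.parr A B) (Formula.parr B A)
  | tensCongr {A A' B B' : Formula} :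
      ACEq A A' → ACEq B B' → ACEq (Formula.tens A B) (Formula.tens A' B')
  | parrCongr {A A' B B' : Formula} :
      ACEq A A' → ACEq B B' → ACEq (Formula.parr A B) (Formula.parr A' B')
  | bangCongr {A A' : Formula} : ACEq A A' → ACEq (Formula.bang A) (Formula.bang A')
  | questCongr {A A' : Formula} : ACEq A A' → ACEq (Formula.quest A) (Formula.quest A')

/-! ## Mixed graphs and relation webs -/

/-- A mixed graph: a finite set of vertices from `ℕ`, an undirected edge relation `R`
and a directed edge relation `lt`. -/
structure MGraph where
  verts : Finset ℕ
  R : ℕ → ℕ → Prop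
  lt : ℕ → ℕ → Prop

namespace MGraph

/-- The axioms of mixed graphs: `R` symmetric and irreflexive, `lt` irreflexive,
`R ∩ lt = ∅`, and all edges between vertices. -/
def IsMixed (G : MGraph) : Prop :=
  (∀ u v, G.R u v → G.R v u) ∧
  (∀ v, ¬ G.R v v) ∧
  (∀ v, ¬ G.lt v v) ∧
  (∀ u v, ¬ (G.R u v ∧ G.lt u v)) ∧
  (∀ u v, G.R u v → u ∈ G.verts ∧ v ∈ G.verts) ∧
  (∀ u v, G.lt u v → u ∈ G.verts ∧ v ∈ G.verts)

/-- `u` and `v` are joined by no edge at all. -/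
def noEdge (G : MGraph) (u v : ℕ) : Prop :=
  ¬ G.R u v ∧ ¬ G.R v u ∧ ¬ G.lt u v ∧ ¬ G.lt v u

/-- A relation web: a non-empty mixed graph with `lt` transitive, `(V,R)` a cograph
(no induced P₄), `(V,lt)` a series-parallel order (no induced N), and no induced
3-color triangle. -/
def IsRelWeb (G : MGraph) : Prop :=
  G.IsMixed ∧ G.verts.Nonempty ∧
  (∀ u v w, G.lt u v → G.lt v w → G.lt u w) ∧
  (¬ ∃ w x y z, w ∈ G.verts ∧ x ∈ G.verts ∧ y ∈ G.verts ∧ z ∈ G.verts ∧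
      w ≠ x ∧ w ≠ y ∧ w ≠ z ∧ x ≠ y ∧ x ≠ z ∧ y ≠ z ∧
      G.R w x ∧ G.R x y ∧ G.R y z ∧ ¬ G.R w y ∧ ¬ G.R w z ∧ ¬ G.R x z) ∧
  (¬ ∃ u v y z, u ∈ G.verts ∧ v ∈ G.verts ∧ y ∈ G.verts ∧ z ∈ G.verts ∧
      u ≠ v ∧ u ≠ y ∧ u ≠ z ∧ v ≠ y ∧ v ≠ z ∧ y ≠ z ∧
      G.lt u v ∧ G.lt y v ∧ G.lt y z ∧
      ¬ G.lt u y ∧ ¬ G.lt y u ∧ ¬ G.lt u z ∧ ¬ G.lt z u ∧ ¬ G.lt v z ∧ ¬ G.lt z v) ∧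
  (¬ ∃ u w v, u ∈ G.verts ∧ w ∈ G.verts ∧ v ∈ G.verts ∧
      u ≠ w ∧ u ≠ v ∧ w ≠ v ∧
      G.noEdge u w ∧ G.R w v ∧ (G.lt u v ∨ G.lt v u))

/-- `G ⅋ H`: disjoint union. -/
def uparr (G H : MGraph) : MGraph where
  verts := G.verts ∪ H.verts
  R := fun u v => G.R u v ∨ H.R u v
  lt := fun u v => G.lt u v ∨ H.lt u v

/-- `G ⊗ H`: disjoint union plus all undirected edges between `G` and `H`. -/
def utens (G H : MGraph) : MGraph where
  verts := G.verts ∪ H.verts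
  R := fun u v => G.R u v ∨ H.R u v ∨
    (u ∈ G.verts ∧ v ∈ H.verts) ∨ (u ∈ H.verts ∧ v ∈ G.verts)
  lt := fun u v => G.lt u v ∨ H.lt u v

/-- `G ◁ H`: disjoint union plus all directed edges from `G` to `H`. -/
def useq (G H : MGraph) : MGraph where
  verts := G.verts ∪ H.verts
  R := fun u v => G.R u v ∨ H.R u v
  lt := fun u v => G.lt u v ∨ H.lt u v ∨ (u ∈ G.verts ∧ v ∈ H.verts)

/-- Graphs constructible from single vertices using `⅋`, `◁` and `⊗`
(applied to disjoint graphs). -/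
inductive Constructible : MGraph → Prop
  | single (n : ℕ) :
      Constructible ⟨{n}, fun _ _ => False, fun _ _ => False⟩
  | parr {G H : MGraph} : Constructible G → Constructible H →
      Disjoint G.verts H.verts → Constructible (uparr G H)
  | tens {G H : MGraph} : Constructible G → Constructible H →
      Disjoint G.verts H.verts → Constructible (utens G H)
  | seq {G H : MGraph} : Constructible G → Constructible H →
      Disjoint G.verts H.verts → Constructible (useq G H)

end MGraph

/-! ## Labeled graphs and the translation of formulas -/

/-- Vertex labels: atoms, dual atoms, `!`, `?`, `1`, `⊥`, `∘`. -/
inductive GLabel where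
  | atom  : ℕ → GLabel
  | natom : ℕ → GLabel
  | bang  : GLabel
  | quest : GLabel
  | one   : GLabel
  | bot   : GLabel
  | hole  : GLabel
  deriving DecidableEq

/-- Atomic labels (atoms or dual atoms). -/
def GLabel.isAtom : GLabel → Prop
  | .atom _  => True
  | .natom _ => True
  | _        => False

/-- A labeled mixed graph. -/
structure LabGraph extends MGraph where
  lab : ℕ → GLabel

namespace LabGraph

/-- A labeled graph is a relation web when its underlying mixed graph is. -/
def IsWeb (G : LabGraph) : Prop := G.toMGraph.IsRelWeb

/-- Properly labeled: a vertex has an outgoing `lt`-edge iff its label is `!` or `?`. -/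
def ProperlyLabeled (G : LabGraph) : Prop :=
  ∀ v ∈ G.verts, (∃ w, G.lt v w) ↔ (G.lab v = GLabel.bang ∨ G.lab v = GLabel.quest)

/-- Modal: properly labeled, and vertices with `lt`-edges to a common target are
`lt`-comparable. -/
def IsModalLab (G : LabGraph) : Prop :=
  G.ProperlyLabeled ∧
  ∀ u v w, u ∈ G.verts → v ∈ G.verts → w ∈ G.verts →
    G.lt u w → G.lt v w → u ≠ v → (G.lt u v ∨ G.lt v u)

/-- A (labeled) modal relation web. -/
def IsModalWeb (G : LabGraph) : Prop := G.IsWeb ∧ G.IsModalLab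

/-- The single-vertex labeled graph. -/
def point (l : GLabel) : LabGraph where
  verts := {0}
  R := fun _ _ => False
  lt := fun _ _ => False
  lab := fun _ => l

/-- `G ⅋ H` on labeled graphs, with vertices renamed evenly/oddly so as to be disjoint. -/
def gparr (G H : LabGraph) : LabGraph where
  verts := G.verts.image (fun n => 2 * n) ∪ H.verts.image (fun n => 2 * n + 1)
  R := fun u v =>
    (u % 2 = 0 ∧ v % 2 = 0 ∧ G.R (u / 2) (v / 2)) ∨
    (u % 2 = 1 ∧ v % 2 = 1 ∧ H.R (u / 2) (v / 2))
  lt := fun u v =>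
    (u % 2 = 0 ∧ v % 2 = 0 ∧ G.lt (u / 2) (v / 2)) ∨
    (u % 2 = 1 ∧ v % 2 = 1 ∧ H.lt (u / 2) (v / 2))
  lab := fun n => if n % 2 = 0 then G.lab (n / 2) else H.lab (n / 2)

/-- `G ⊗ H` on labeled graphs. -/
def gtens (G H : LabGraph) : LabGraph where
  verts := (gparr G H).verts
  R := fun u v => (gparr G H).R u v ∨
    (u % 2 = 0 ∧ v % 2 = 1 ∧ u / 2 ∈ G.verts ∧ v / 2 ∈ H.verts) ∨
    (u % 2 = 1 ∧ v % 2 = 0 ∧ u / 2 ∈ H.verts ∧ v / 2 ∈ G.verts)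
  lt := (gparr G H).lt
  lab := (gparr G H).lab

/-- `G ◁ H` on labeled graphs. -/
def gseq (G H : LabGraph) : LabGraph where
  verts := (gparr G H).verts
  R := (gparr G H).R
  lt := fun u v => (gparr G H).lt u v ∨
    (u % 2 = 0 ∧ v % 2 = 1 ∧ u / 2 ∈ G.verts ∧ v / 2 ∈ H.verts)
  lab := (gparr G H).lab

/-- The translation `⟦·⟧` of formulas into labeled graphs. -/
def trans : Formula → LabGraph
  | .atom a  => point (.atom a)
  | .natom a => point (.natom a)
  | .one     => point .one
  | .bot     => point .bot
  | .hole    => point .hole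
  | .parr A B => gparr (trans A) (trans B)
  | .tens A B => gtens (trans A) (trans B)
  | .bang A  => gseq (point .bang) (trans A)
  | .quest A => gseq (point .quest) (trans A)

/-- The translation of a sequent (represented as a non-empty list): `⅋` of the members. -/
def transSeq : List Formula → LabGraph
  | [] => point .hole
  | [A] => trans A
  | A :: B :: Γ => gparr (trans A) (transSeq (B :: Γ))

/-- Isomorphism of labeled mixed graphs. -/
def Iso (G H : LabGraph) : Prop :=
  ∃ f : ℕ → ℕ, Set.BijOn f ↑G.verts ↑H.verts ∧
    (∀ u ∈ G.verts, ∀ v ∈ G.verts,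
      (G.R u v ↔ H.R (f u) (f v)) ∧ (G.lt u v ↔ H.lt (f u) (f v))) ∧
    (∀ v ∈ G.verts, H.lab (f v) = G.lab v)

end LabGraph

/-! ## RGB-cographs -/

/-- An RGB-cograph: a labeled graph together with a linking relation. -/
structure RGB extends LabGraph where
  link : ℕ → ℕ → Prop

namespace RGB

/-- The conditions for being an RGB-cograph. -/
def IsRGB (G : RGB) : Prop :=
  G.toLabGraph.IsModalWeb ∧
  (∀ v ∈ G.verts, G.link v v) ∧
  (∀ u v, G.link u v → G.link v u) ∧
  (∀ u v w, G.link u v → G.link v w → G.link u w) ∧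
  (∀ u v, G.link u v → u ∈ G.verts ∧ v ∈ G.verts) ∧
  (∀ v ∈ G.verts, (G.lab v).isAtom →
      ∃! w, w ≠ v ∧ G.link v w ∧ (G.lab w).isAtom) ∧
  (∀ v ∈ G.verts, G.lab v = GLabel.one →
      ∀ w, G.link v w → w ≠ v → G.lab w = GLabel.hole) ∧
  (∀ v ∈ G.verts, G.lab v = GLabel.hole →
      ∃ w, G.link v w ∧ ((G.lab w).isAtom ∨ G.lab w = GLabel.one)) ∧
  (∀ v ∈ G.verts, (G.lab v = GLabel.bang ∨ G.lab v = GLabel.quest) →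
      (∃! w, G.link v w ∧ G.lab w = GLabel.bang) ∧
      (∀ w, G.link v w → G.lab w ≠ GLabel.hole))

/-- Adjacency by an `R`- or `lt`-edge (in either direction). -/
def rlAdj (G : RGB) (u v : ℕ) : Prop :=
  G.R u v ∨ G.R v u ∨ G.lt u v ∨ G.lt v u

/-- Adjacency by a linking edge. -/
def lkAdj (G : RGB) (u v : ℕ) : Prop := G.link u v ∧ u ≠ v

/-- A single step of an alternating path; `true` = linking edge, `false` = R/lt edge. -/
def aeStep (G : RGB) : Bool → ℕ → ℕ → Prop
  | true,  u, v => G.lkAdj u v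
  | false, u, v => G.rlAdj u v

/-- The edges of the list alternate, starting with an edge of kind `b`. -/
def AltChain (G : RGB) : Bool → List ℕ → Prop
  | _, [] => True
  | _, [_] => True
  | b, u :: v :: l => G.aeStep b u v ∧ AltChain G (!b) (v :: l)

/-- An æ-path: a non-empty elementary alternating path on vertices of `G`. -/
def IsAEPath (G : RGB) (l : List ℕ) : Prop :=
  l ≠ [] ∧ l.Nodup ∧ (∀ v ∈ l, v ∈ G.verts) ∧ ∃ b, G.AltChain b l

/-- A path is chordless if no `R`/`lt` edge joins two non-consecutive vertices. -/
def Chordless (G : RGB) (l : List ℕ) : Prop :=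
  ∀ (i j : ℕ) (hi : i < l.length) (hj : j < l.length), i + 2 ≤ j →
    ¬ G.rlAdj (l.get ⟨i, hi⟩) (l.get ⟨j, hj⟩)

/-- æ-connectedness: any two vertices are joined by a chordless æ-path. -/
def AEConnected (G : RGB) : Prop :=
  ∀ u ∈ G.verts, ∀ v ∈ G.verts,
    ∃ l, G.IsAEPath l ∧ G.Chordless l ∧ l.head? = some u ∧ l.getLast? = some v

/-- An æ-cycle, represented by the list of its (distinct) vertices; the closing edge
returns to the first vertex and the number of edges is even so that alternation closes. -/
def IsAECycle (G : RGB) (l : List ℕ) : Prop :=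
  2 ≤ l.length ∧ l.length % 2 = 0 ∧ l.Nodup ∧ (∀ v ∈ l, v ∈ G.verts) ∧
  ∃ b, G.AltChain b (l ++ [l.headI])

/-- Chordlessness for cycles: no `R`/`lt` edge between cyclically non-consecutive
vertices. -/
def ChordlessCyc (G : RGB) (l : List ℕ) : Prop :=
  ∀ (i j : ℕ) (hi : i < l.length) (hj : j < l.length), i + 2 ≤ j →
    ¬ (i = 0 ∧ j = l.length - 1) →
    ¬ G.rlAdj (l.get ⟨i, hi⟩) (l.get ⟨j, hj⟩)

/-- æ-acyclicity: no chordless æ-cycle. -/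
def AEAcyclic (G : RGB) : Prop :=
  ¬ ∃ l, G.IsAECycle l ∧ G.ChordlessCyc l

/-- MELL-correctness of an RGB-cograph. -/
def MELLCorrect (G : RGB) : Prop :=
  G.verts.Nonempty ∧ G.AEConnected ∧ G.AEAcyclic ∧
  (∀ w v v', G.lt w v → G.link v v' → ∃ w', G.link w' w ∧ G.lt w' v')

/-- MLL-correctness: MELL-correct and every vertex is atomic. -/
def MLLCorrect (G : RGB) : Prop :=
  G.MELLCorrect ∧ ∀ v ∈ G.verts, (G.lab v).isAtom

/-- MLLu-correctness: MELL-correct and every vertex is atomic, `1` or `∘`. -/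
def MLLuCorrect (G : RGB) : Prop :=
  G.MELLCorrect ∧
  ∀ v ∈ G.verts, (G.lab v).isAtom ∨ G.lab v = GLabel.one ∨ G.lab v = GLabel.hole

end RGB

/-! ## Fibrations -/

/-- No edge at all between `u` and `v` in the labeled graph `H`. -/
def LabGraph.noE (H : LabGraph) (u v : ℕ) : Prop := H.toMGraph.noEdge u v

/-- A linear fibration between labeled modal relation webs. -/
def IsLinearFib (G H : LabGraph) (f : ℕ → ℕ) : Prop :=
  (∀ v ∈ G.verts, f v ∈ H.verts) ∧
  -- (1) preservation of R and lt
  (∀ u v, u ∈ G.verts → v ∈ G.verts →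
    (G.R u v → H.R (f u) (f v)) ∧ (G.lt u v → H.lt (f u) (f v))) ∧
  -- (2) skew lifting
  (∀ v ∈ G.verts, ∀ w ∈ H.verts,
    (H.R w (f v) → ∃ u ∈ G.verts, G.R u v ∧ H.noE w (f u)) ∧
    (H.lt w (f v) → ∃ u ∈ G.verts, G.lt u v ∧ H.noE w (f u))) ∧
  -- (3) modality
  (∀ u v, u ∈ G.verts → v ∈ G.verts → u ≠ v → G.noE u v → H.lt (f u) (f v) →
    ∃ w ∈ G.verts, (G.lt w v ∧ f w = f u) ∨ (G.lt u w ∧ f w = f v)) ∧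
  -- (4) labels
  (∀ v ∈ G.verts,
    (G.lab v ≠ GLabel.hole → H.lab (f v) = G.lab v) ∧
    (G.lab v = GLabel.hole →
      H.lab (f v) = GLabel.hole ∨ H.lab (f v) = GLabel.bot ∨ H.lab (f v) = GLabel.quest)) ∧
  -- (5) ∘-domination
  (∀ w ∈ H.verts, (∀ v ∈ G.verts, f v ≠ w) →
    ∃ u ∈ G.verts, G.lab u = GLabel.hole ∧ H.lab (f u) = GLabel.quest ∧ H.lt (f u) w ∧
      ∀ v ∈ G.verts, (H.R (f v) (f u) ↔ H.R (f v) w) ∧ (H.lt (f v) (f u) ↔ H.lt (f v) w)) ∧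
  -- (6) ?-domination
  (∀ v₁ v₂, v₁ ∈ G.verts → v₂ ∈ G.verts → v₁ ≠ v₂ → f v₁ = f v₂ →
    ∃ w₁ w₂, w₁ ∈ G.verts ∧ w₂ ∈ G.verts ∧ w₁ ≠ w₂ ∧ f w₁ = f w₂ ∧
      H.lab (f w₁) = GLabel.quest ∧
      ((w₁ = v₁ ∧ w₂ = v₂) ∨ (G.lt w₁ v₁ ∧ G.lt w₂ v₂)))

/-- `v` and `w` are clones: every other vertex relates to them in the same way. -/
def Clones (G : LabGraph) (v w : ℕ) : Prop :=
  ∀ u ∈ G.verts, u ≠ v → u ≠ w →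
    (G.R u v ↔ G.R u w) ∧ (G.lt u v ↔ G.lt u w) ∧ (G.lt v u ↔ G.lt w u) ∧
    (G.noE u v ↔ G.noE u w)

/-- A ?-map between labeled modal relation webs. -/
def IsQMap (G H : LabGraph) (f : ℕ → ℕ) : Prop :=
  (∀ v ∈ G.verts, f v ∈ H.verts) ∧
  (∀ v w, v ∈ G.verts → w ∈ G.verts → v ≠ w → f v = f w →
    Clones G v w ∧ G.lt v w ∧ H.lab (f v) = G.lab w ∧
    (G.lab w = GLabel.quest ∨ G.lab w = GLabel.hole)) ∧
  (∀ v w, v ∈ G.verts → w ∈ G.verts → f v ≠ f w →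
    (G.R v w → H.R (f v) (f w)) ∧ (G.lt v w → H.lt (f v) (f w)) ∧
    (G.lt w v → H.lt (f w) (f v)) ∧ (G.noE v w → H.noE (f v) (f w))) ∧
  (∀ w ∈ H.verts, (∀ v ∈ G.verts, f v ≠ w) →
    H.lab w = GLabel.quest ∧ ∃ x, H.lt w x)

/-- A MELL-fibration: the composite of a ?-map followed by a linear fibration. -/
def IsMELLFib (G H : LabGraph) (f : ℕ → ℕ) : Prop :=
  ∃ (K : LabGraph) (g h : ℕ → ℕ),
    K.IsModalWeb ∧ IsQMap G K g ∧ IsLinearFib K H h ∧ ∀ v ∈ G.verts, f v = h (g v)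

/-- A MLLu-fibration: a MELL-fibration whose codomain has no `!` or `?` vertex. -/
def IsMLLuFib (G H : LabGraph) (f : ℕ → ℕ) : Prop :=
  IsMELLFib G H f ∧
  ∀ v ∈ H.verts, H.lab v ≠ GLabel.bang ∧ H.lab v ≠ GLabel.quest

/-- A MLL-fibration: a bijection whose codomain has no `!`, `?` or `∘` vertex. -/
def IsMLLFib (G H : LabGraph) (f : ℕ → ℕ) : Prop :=
  Set.BijOn f ↑G.verts ↑H.verts ∧
  ∀ v ∈ H.verts,
    H.lab v ≠ GLabel.bang ∧ H.lab v ≠ GLabel.quest ∧ H.lab v ≠ GLabel.hole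

/-- An allegiant map from an RGB-cograph to a labeled relation web. -/
def Allegiant (G : RGB) (H : LabGraph) (f : ℕ → ℕ) : Prop :=
  (∀ v w, v ∈ G.verts → w ∈ G.verts → G.link v w → v ≠ w →
    (G.lab v).isAtom → (G.lab w).isAtom →
    ∃ n : ℕ, (H.lab (f v) = GLabel.atom n ∧ H.lab (f w) = GLabel.natom n) ∨
             (H.lab (f v) = GLabel.natom n ∧ H.lab (f w) = GLabel.atom n)) ∧
  (∀ v ∈ G.verts, G.lab v ≠ GLabel.hole → H.lab (f v) = G.lab v) ∧
  (∀ v ∈ G.verts, G.lab v = GLabel.hole →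
    H.lab (f v) = GLabel.bot ∨ H.lab (f v) = GLabel.quest)

/-! ## Systems, correctness and combinatorial proofs, parametrized by X -/

inductive Sys where
  | MLL | MLLu | MELL

/-- Provability in the sequent system `X`. -/
def SysProv : Sys → Sequent → Prop
  | Sys.MLL  => ProvMLL
  | Sys.MLLu => ProvMLLu
  | Sys.MELL => ProvMELL

/-- Provability in the linear system `X^ℓ`. -/
def SysProvLin : Sys → Sequent → Prop
  | Sys.MLL  => ProvMLL
  | Sys.MLLu => ProvMLLuLin
  | Sys.MELL => ProvMELLLin

/-- The appropriate class of formulas for `X`: MELL-formulas for MELL; formulas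
without modalities for MLLu; formulas without modalities and without `∘` for MLL. -/
def SysForm : Sys → Formula → Prop
  | Sys.MLL  => fun F => F.noMod ∧ F.isMELL
  | Sys.MLLu => Formula.noMod
  | Sys.MELL => Formula.isMELL

/-- `X`-correctness of RGB-cographs. -/
def SysCorrect : Sys → RGB → Prop
  | Sys.MLL  => RGB.MLLCorrect
  | Sys.MLLu => RGB.MLLuCorrect
  | Sys.MELL => RGB.MELLCorrect

/-- `X`-fibrations. -/
def SysFib : Sys → LabGraph → LabGraph → (ℕ → ℕ) → Prop
  | Sys.MLL  => IsMLLFib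
  | Sys.MLLu => IsMLLuFib
  | Sys.MELL => IsMELLFib

/-- An `X`-combinatorial proof with conclusion graph `H`: an allegiant `X`-fibration
from an `X`-correct RGB-cograph. -/
def IsCombProof (X : Sys) (G : RGB) (f : ℕ → ℕ) (H : LabGraph) : Prop :=
  G.IsRGB ∧ SysCorrect X G ∧ Allegiant G H f ∧ SysFib X G.toLabGraph H f


/-- Substitute `⊥` for every occurrence of `∘`. -/
def elimHole : Formula → Formula
  | .hole => .bot
  | .parr A B => .parr (elimHole A) (elimHole B)
  | .tens A B => .tens (elimHole A) (elimHole B)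
  | .bang A => .bang (elimHole A)
  | .quest A => .quest (elimHole A)
  | .atom a => .atom a
  | .natom a => .natom a
  | .bot => .bot
  | .one => .one

lemma elimHole_eq_self (F : Formula) (hF : F.isMLLu) : elimHole F = F := by
  induction F with
  | parr A B ihA ihB => simp [Formula.isMLLu] at hF; simp [elimHole, ihA hF.1, ihB hF.2]
  | tens A B ihA ihB => simp [Formula.isMLLu] at hF; simp [elimHole, ihA hF.1, ihB hF.2]
  | bang A ih => simp [Formula.isMLLu] at hF
  | quest A ih => simp [Formula.isMLLu] at hF
  | hole => simp [Formula.isMLLu] at hF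
  | _ => rfl

lemma provMLLu_bots (Γ : Sequent) (h : ProvMLLu Γ) (n : ℕ) :
    ProvMLLu (Γ + Multiset.replicate n Formula.bot) := by
  induction n with
  | zero => simpa using h
  | succ n ih =>
      have := ProvMLLu.bot _ ih
      have heq : Formula.bot ::ₘ (Γ + Multiset.replicate n Formula.bot)
          = Γ + Multiset.replicate (n + 1) Formula.bot := by
        rw [Multiset.replicate_succ, Multiset.add_cons]
      rwa [heq] at this

lemma mlluj_to_mllu (Γ : Sequent) (h : ProvMLLuj Γ) :
    ProvMLLu (Γ.map elimHole) := by
  induction h with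
  | axj a n =>
      have h0 : ProvMLLu ({Formula.atom a, Formula.natom a} : Sequent) := ProvMLLu.ax a
      have := provMLLu_bots _ h0 n
      have heq : (Multiset.map elimHole
            (Formula.atom a ::ₘ Formula.natom a ::ₘ Multiset.replicate n Formula.hole))
          = ({Formula.atom a, Formula.natom a} : Sequent) + Multiset.replicate n Formula.bot := by
        simp [elimHole, Multiset.map_replicate]
      rw [heq]; exact this
  | onej n =>
      have := provMLLu_bots _ ProvMLLu.one n
      have heq : (Multiset.map elimHole
            (Formula.one ::ₘ Multiset.replicate n Formula.hole))
          = ({Formula.one} : Sequent) + Multiset.replicate n Formula.bot := by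
        simp [elimHole, Multiset.map_replicate]
      rw [heq]; exact this
  | botj Γ _ ih =>
      simp only [Multiset.map_cons] at ih ⊢
      exact ih
  | parr Γ A B _ ih =>
      simp only [Multiset.map_cons] at ih ⊢
      exact ProvMLLu.parr _ _ _ ih
  | tens Γ Δ A B _ _ ih1 ih2 =>
      simp only [Multiset.map_cons, Multiset.map_add] at ih1 ih2 ⊢
      exact ProvMLLu.tens _ _ _ _ ih1 ih2

lemma mlluj_hole_weak (Γ : Sequent) (h : ProvMLLuj Γ) :
    ProvMLLuj (Formula.hole ::ₘ Γ) := by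
  induction h with
  | axj a n =>
      have := ProvMLLuj.axj a (n + 1)
      have heq : Formula.atom a ::ₘ Formula.natom a ::ₘ Multiset.replicate (n+1) Formula.hole
          = Formula.hole ::ₘ Formula.atom a ::ₘ Formula.natom a ::ₘ
              Multiset.replicate n Formula.hole := by
        rw [Multiset.replicate_succ]
        calc Formula.atom a ::ₘ Formula.natom a ::ₘ Formula.hole ::ₘ
                Multiset.replicate n Formula.hole
            = Formula.atom a ::ₘ Formula.hole ::ₘ Formula.natom a ::ₘ
                Multiset.replicate n Formula.hole := congrArg _ (Multiset.cons_swap _ _ _)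
          _ = Formula.hole ::ₘ Formula.atom a ::ₘ Formula.natom a ::ₘ
                Multiset.replicate n Formula.hole := Multiset.cons_swap _ _ _
      rwa [heq] at this
  | onej n =>
      have := ProvMLLuj.onej (n + 1)
      have heq : Formula.one ::ₘ Multiset.replicate (n+1) Formula.hole
          = Formula.hole ::ₘ Formula.one ::ₘ Multiset.replicate n Formula.hole := by
        simp [Multiset.replicate_succ, Multiset.cons_swap]
      rwa [heq] at this
  | botj Γ _ ih =>
      rw [Multiset.cons_swap] at ih
      have := ProvMLLuj.botj _ ih
      rwa [Multiset.cons_swap] at this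
  | parr Γ A B _ ih =>
      have heq : Formula.hole ::ₘ A ::ₘ B ::ₘ Γ = A ::ₘ B ::ₘ Formula.hole ::ₘ Γ := by
        calc Formula.hole ::ₘ A ::ₘ B ::ₘ Γ
            = A ::ₘ Formula.hole ::ₘ B ::ₘ Γ := Multiset.cons_swap _ _ _
          _ = A ::ₘ B ::ₘ Formula.hole ::ₘ Γ := congrArg _ (Multiset.cons_swap _ _ _)
      rw [heq] at ih
      have := ProvMLLuj.parr _ _ _ ih
      rwa [Multiset.cons_swap] at this
  | tens Γ Δ A B _ _ ih1 ih2 =>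
      rw [Multiset.cons_swap] at ih1
      have := ProvMLLuj.tens _ _ _ _ ih1 ‹ProvMLLuj (B ::ₘ Δ)›
      have heq : Formula.tens A B ::ₘ ((Formula.hole ::ₘ Γ) + Δ)
          = Formula.hole ::ₘ Formula.tens A B ::ₘ (Γ + Δ) := by
        rw [Multiset.cons_add, Multiset.cons_swap]
      rwa [heq] at this

lemma mllu_to_mlluj (Γ : Sequent) (h : ProvMLLu Γ) : ProvMLLuj Γ := by
  induction h with
  | ax a => simpa using ProvMLLuj.axj a 0
  | parr Γ A B _ ih => exact ProvMLLuj.parr _ _ _ ih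
  | tens Γ Δ A B _ _ ih1 ih2 => exact ProvMLLuj.tens _ _ _ _ ih1 ih2
  | bot Γ _ ih => exact ProvMLLuj.botj _ (mlluj_hole_weak _ ih)
  | one => simpa using ProvMLLuj.onej 0

/-- For every formula `F` of multiplicative linear logic with units,
`F` is provable in MLLu if and only if `F` is provable in MLLu^j. -/
theorem mllu_iff_mlluj (F : Formula) (hF : F.isMLLu) :
    ProvMLLu {F} ↔ ProvMLLuj {F} := by
  constructor
  · exact mllu_to_mlluj _
  · intro h
    have := mlluj_to_mllu _ h
    simpa [elimHole_eq_self F hF] using this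
end

section
/- If a MELL-formula F is provable in the sequent system MELL, then there exist formulas F′, F″, F‴ such that F′ is provable in MELL^ℓ, F″ is derivable from F′ using only the deep dereliction, deep digging and deep ∘-digging rules, F‴ is derivable from F″ using only the deep weakening and deep ⊥ rules, and F is derivable from F‴ using only the deep contraction rule. -/
/-! ## Auxiliary material for the fine decomposition -/

section FineDecomp

open Formula

private lemma fdLift {r : Formula → Formula → Prop} {f : Formula → Formula}
    (hf : ∀ {A B : Formula}, Deep r A B → Deep r (f A) (f B)) {A B : Formula}
    (h : FormDeriv r A B) : FormDeriv r (f A) (f B) :=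
  Relation.ReflTransGen.lift f (fun _ _ hab => hf hab) _ _ h

private lemma fd_quest {r} {A B : Formula} (h : FormDeriv r A B) :
    FormDeriv r (quest A) (quest B) := fdLift (fun h => Deep.quest h) h

private lemma fd_bang {r} {A B : Formula} (h : FormDeriv r A B) :
    FormDeriv r (bang A) (bang B) := fdLift (fun h => Deep.bang h) h

private lemma fd_parrL {r} {A B : Formula} (C : Formula) (h : FormDeriv r A B) :
    FormDeriv r (parr A C) (parr B C) := fdLift (fun h => Deep.parrL C h) h

private lemma fd_parrR {r} {A B : Formula} (C : Formula) (h : FormDeriv r A B) :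
    FormDeriv r (parr C A) (parr C B) := fdLift (fun h => Deep.parrR C h) h

private lemma fd_tensL {r} {A B : Formula} (C : Formula) (h : FormDeriv r A B) :
    FormDeriv r (tens A C) (tens B C) := fdLift (fun h => Deep.tensL C h) h

private lemma fd_tensR {r} {A B : Formula} (C : Formula) (h : FormDeriv r A B) :
    FormDeriv r (tens C A) (tens C B) := fdLift (fun h => Deep.tensR C h) h

private lemma questN_quest (n : ℕ) (A : Formula) :
    questN n (quest A) = quest (questN n A) := by
  induction n with
  | zero => rfl
  | succ m ih => simp [questN, ih]

private lemma questN_add (m n : ℕ) (A : Formula) :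
    questN m (questN n A) = questN (m + n) A := by
  induction m with
  | zero => show questN n A = questN (0 + n) A
            rw [Nat.zero_add]
  | succ k ih => show quest _ = questN (k + 1 + n) A
                 rw [ih, show k + 1 + n = (k + n) + 1 by omega]; rfl

private lemma fd_digs (n : ℕ) (A : Formula) :
    FormDeriv DigBase (questN n (quest A)) (quest A) := by
  induction n with
  | zero => exact Relation.ReflTransGen.refl
  | succ m ih =>
      have e : questN (m + 1) (quest A) = quest (quest (questN m A)) := by
        rw [questN_quest]; rfl
      rw [e]
      exact Relation.ReflTransGen.head (Deep.base (DigBase.dig (questN m A)))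
        (by rw [← questN_quest]; exact ih)

private lemma fd_holes (n : ℕ) :
    FormDeriv DigBase (questN n Formula.hole) Formula.hole := by
  cases n with
  | zero => exact Relation.ReflTransGen.refl
  | succ m =>
      have e : questN (m + 1) Formula.hole = questN m (quest Formula.hole) := by
        rw [questN_quest]; rfl
      rw [e]
      exact (fd_digs m Formula.hole).tail (Deep.base DigBase.digHole)

/-- A chain: Dig steps, then Weak steps, then Contr steps. -/
private def Chain (A D : Formula) : Prop :=
  ∃ B C, FormDeriv DigBase A B ∧ FormDeriv WeakBase B C ∧ FormDeriv ContrBase C D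

private lemma chain_refl (A : Formula) : Chain A A :=
  ⟨A, A, Relation.ReflTransGen.refl, Relation.ReflTransGen.refl, Relation.ReflTransGen.refl⟩

private lemma chain_quest {A D : Formula} (h : Chain A D) : Chain (quest A) (quest D) := by
  obtain ⟨B, C, h1, h2, h3⟩ := h
  exact ⟨quest B, quest C, fd_quest h1, fd_quest h2, fd_quest h3⟩

private lemma chain_bang {A D : Formula} (h : Chain A D) : Chain (bang A) (bang D) := by
  obtain ⟨B, C, h1, h2, h3⟩ := h
  exact ⟨bang B, bang C, fd_bang h1, fd_bang h2, fd_bang h3⟩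

private lemma chain_parr {A D A' D' : Formula} (h : Chain A D) (h' : Chain A' D') :
    Chain (parr A A') (parr D D') := by
  obtain ⟨B, C, h1, h2, h3⟩ := h
  obtain ⟨B', C', h1', h2', h3'⟩ := h'
  exact ⟨parr B B', parr C C',
    (fd_parrL _ h1).trans (fd_parrR _ h1'),
    (fd_parrL _ h2).trans (fd_parrR _ h2'),
    (fd_parrL _ h3).trans (fd_parrR _ h3')⟩

private lemma chain_tens {A D A' D' : Formula} (h : Chain A D) (h' : Chain A' D') :
    Chain (tens A A') (tens D D') := by
  obtain ⟨B, C, h1, h2, h3⟩ := h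
  obtain ⟨B', C', h1', h2', h3'⟩ := h'
  exact ⟨tens B B', tens C C',
    (fd_tensL _ h1).trans (fd_tensR _ h1'),
    (fd_tensL _ h2).trans (fd_tensR _ h2'),
    (fd_tensL _ h3).trans (fd_tensR _ h3')⟩

private lemma chain_contr_post {A X Y : Formula} (h : Chain A X)
    (h' : FormDeriv ContrBase X Y) : Chain A Y := by
  obtain ⟨B, C, h1, h2, h3⟩ := h
  exact ⟨B, C, h1, h2, h3.trans h'⟩

/-- Strong chain: chains from any number of `?`-wrappings. -/
private def SChain (A D : Formula) : Prop := ∀ n, Chain (questN n A) D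

private lemma schain_der {A D : Formula} (h : Chain A D) : SChain A (quest D) := by
  obtain ⟨B, C, h1, h2, h3⟩ := h
  intro n
  refine ⟨quest B, quest C, ?_, fd_quest h2, fd_quest h3⟩
  cases n with
  | zero => exact h1.tail (Deep.base (DigBase.der B))
  | succ m =>
      have e : questN (m + 1) A = questN m (quest A) := (questN_quest m A).symm
      rw [e]
      exact (fd_digs m A).trans (fd_quest h1)

private lemma schain_quest {A D : Formula} (h : SChain A D) : SChain (quest A) D := by
  intro n
  rw [questN_quest, show quest (questN n A) = questN (n + 1) A from rfl]
  exact h (n + 1)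

private lemma schain_hole (m : ℕ) (A : Formula) :
    SChain (questN m Formula.hole) (quest A) := by
  intro n
  refine ⟨Formula.hole, quest A, ?_, Relation.ReflTransGen.single (Deep.base (WeakBase.weak A)),
    Relation.ReflTransGen.refl⟩
  rw [questN_add]
  exact fd_holes _

private lemma chain_hole_bot (n : ℕ) : Chain (questN n Formula.hole) Formula.bot :=
  ⟨Formula.hole, Formula.bot, fd_holes n,
    Relation.ReflTransGen.single (Deep.base WeakBase.bot), Relation.ReflTransGen.refl⟩

/-- The invariant on a group `L` of linear formulas for the conclusion formula `D`. -/
private def Good (L : List Formula) (D : Formula) : Prop :=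
  L ≠ [] ∧ (∀ a ∈ L, Chain a D) ∧
  ((∃ a, L = [a]) ∨ ∃ G, D = Formula.quest G) ∧
  (∀ G, D = Formula.quest G → ∀ a ∈ L, SChain a D)

private lemma good_single {a D : Formula} (h : Chain a D)
    (hD : ∀ G, D ≠ Formula.quest G) : Good [a] D :=
  ⟨by simp, by simpa using h, Or.inl ⟨a, rfl⟩, fun G hG => absurd hG (hD G)⟩

private lemma good_quest {L : List Formula} {G : Formula} (hne : L ≠ [])
    (h : ∀ a ∈ L, SChain a (Formula.quest G)) : Good L (Formula.quest G) :=
  ⟨hne, fun a ha => by simpa [questN] using h a ha 0, Or.inr ⟨G, rfl⟩,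
   fun G' hG' a ha => hG' ▸ h a ha⟩

/-- The `⅋`-tree of a group. -/
private def pT : List Formula → Formula
  | [] => Formula.hole
  | a :: l => l.foldl Formula.parr a

private lemma lin_fold_aux (l : List Formula) :
    ∀ (a : Formula) (Γ : Sequent), ProvMELLLin (a ::ₘ ((l : Multiset Formula) + Γ)) →
      ProvMELLLin (l.foldl Formula.parr a ::ₘ Γ) := by
  induction l with
  | nil => intro a Γ h; simpa using h
  | cons b l ih =>
      intro a Γ h
      have h' : ProvMELLLin (a ::ₘ b ::ₘ ((l : Multiset Formula) + Γ)) := by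
        rwa [← Multiset.cons_coe, Multiset.cons_add] at h
      exact ih (Formula.parr a b) Γ (ProvMELLLin.parr _ a b h')

private lemma lin_fold {L : List Formula} (hne : L ≠ []) {Γ : Sequent}
    (h : ProvMELLLin ((L : Multiset Formula) + Γ)) : ProvMELLLin (pT L ::ₘ Γ) := by
  cases L with
  | nil => exact absurd rfl hne
  | cons a l =>
      apply lin_fold_aux l a Γ
      rwa [← Multiset.cons_coe, Multiset.cons_add] at h

private lemma chain_fold_aux {G : Formula} (l : List Formula) :
    ∀ x : Formula, Chain x (quest G) → (∀ a ∈ l, Chain a (quest G)) →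
      Chain (l.foldl Formula.parr x) (quest G) := by
  induction l with
  | nil => intro x hx _; exact hx
  | cons b l ih =>
      intro x hx hl
      refine ih (Formula.parr x b) ?_ (fun a ha => hl a (by simp [ha]))
      exact chain_contr_post (chain_parr hx (hl b (by simp)))
        (Relation.ReflTransGen.single (Deep.base (ContrBase.contr G)))

private lemma good_fold {L : List Formula} {D : Formula} (h : Good L D) : Chain (pT L) D := by
  obtain ⟨hne, hch, hcase, _⟩ := h
  rcases hcase with ⟨a, rfl⟩ | ⟨G, rfl⟩
  · simpa [pT] using hch a (by simp)
  · cases L with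
    | nil => exact absurd rfl hne
    | cons a l => exact chain_fold_aux l a (hch a (by simp)) (fun b hb => hch b (by simp [hb]))

private lemma lin_addHole {Γ : Sequent} (h : ProvMELLLin Γ) :
    ∃ n, ProvMELLLin (questN n Formula.hole ::ₘ Γ) := by
  induction h with
  | axj a n =>
      refine ⟨0, ?_⟩
      have e : (questN 0 Formula.hole ::ₘ Formula.atom a ::ₘ Formula.natom a ::ₘ
          Multiset.replicate n Formula.hole)
          = Formula.atom a ::ₘ Formula.natom a ::ₘ Multiset.replicate (n + 1) Formula.hole := by
        show (Formula.hole ::ₘ _) = _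
        rw [Multiset.replicate_succ, Multiset.cons_swap Formula.hole,
          Multiset.cons_swap Formula.hole]
      rw [e]; exact ProvMELLLin.axj a (n + 1)
  | onej n =>
      refine ⟨0, ?_⟩
      have e : (questN 0 Formula.hole ::ₘ Formula.one ::ₘ Multiset.replicate n Formula.hole)
          = Formula.one ::ₘ Multiset.replicate (n + 1) Formula.hole := by
        show (Formula.hole ::ₘ _) = _
        rw [Multiset.replicate_succ, Multiset.cons_swap Formula.hole]
      rw [e]; exact ProvMELLLin.onej (n + 1)
  | parr Γ A B _ ih =>
      obtain ⟨n, hn⟩ := ih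
      refine ⟨n, ?_⟩
      have h' : ProvMELLLin (A ::ₘ B ::ₘ (questN n Formula.hole ::ₘ Γ)) := by
        have e : (questN n Formula.hole ::ₘ A ::ₘ B ::ₘ Γ)
            = A ::ₘ B ::ₘ questN n Formula.hole ::ₘ Γ := by
          rw [Multiset.cons_swap (questN n Formula.hole) A,
            Multiset.cons_swap (questN n Formula.hole) B]
        rwa [e] at hn
      have := ProvMELLLin.parr _ A B h'
      rwa [Multiset.cons_swap] at this
  | tens Γ Δ A B _ _ ih1 _ =>
      obtain ⟨n, hn⟩ := ih1
      refine ⟨n, ?_⟩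
      have h' : ProvMELLLin (A ::ₘ (questN n Formula.hole ::ₘ Γ)) := by
        rwa [Multiset.cons_swap] at hn
      have := ProvMELLLin.tens _ Δ A B h' ‹ProvMELLLin (B ::ₘ Δ)›
      rw [Multiset.cons_add, Multiset.cons_swap] at this
      exact this
  | wprom Γ A _ ih =>
      obtain ⟨n, hn⟩ := ih
      refine ⟨n + 1, ?_⟩
      have h' : ProvMELLLin (A ::ₘ (questN n Formula.hole ::ₘ Γ)) := by
        rwa [Multiset.cons_swap] at hn
      have := ProvMELLLin.wprom _ A h'
      have e : Formula.bang A ::ₘ (questN n Formula.hole ::ₘ Γ).map Formula.quest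
          = questN (n + 1) Formula.hole ::ₘ Formula.bang A ::ₘ Γ.map Formula.quest := by
        rw [Multiset.map_cons, Multiset.cons_swap]
        rfl
      rwa [e] at this

/-- Extraction of an entry whose conclusion component is the head of the sequent. -/
private lemma extract {S : Multiset (List Formula × Formula)} {A : Formula} {Δ : Sequent}
    (h : S.map Prod.snd = A ::ₘ Δ) :
    ∃ (L : List Formula) (S' : Multiset (List Formula × Formula)),
      S = (L, A) ::ₘ S' ∧ S'.map Prod.snd = Δ := by
  have hA : A ∈ S.map Prod.snd := h ▸ Multiset.mem_cons_self _ _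
  obtain ⟨p, hp, hp2⟩ := Multiset.mem_map.mp hA
  refine ⟨p.1, S.erase p, ?_, ?_⟩
  · have : p = (p.1, A) := by rw [← hp2]
    rw [← this]
    exact (Multiset.cons_erase hp).symm
  · have e1 : S.map Prod.snd = A ::ₘ (S.erase p).map Prod.snd := by
      conv_lhs => rw [← Multiset.cons_erase hp]
      rw [Multiset.map_cons, hp2]
    rw [e1] at h
    exact (Multiset.cons_inj_right A).mp h

private lemma decomp_main {Γ : Sequent} (h : ProvMELL Γ) :
    ∃ S : Multiset (List Formula × Formula),
      S.map Prod.snd = Γ ∧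
      ProvMELLLin (S.bind fun p => (p.1 : Multiset Formula)) ∧
      ∀ p ∈ S, Good p.1 p.2 := by
  induction h with
  | ax a =>
      refine ⟨([Formula.atom a], Formula.atom a) ::ₘ ([Formula.natom a], Formula.natom a) ::ₘ 0,
        by simp, ?_, ?_⟩
      · have := ProvMELLLin.axj a 0
        simp only [Multiset.replicate_zero] at this
        simpa [Multiset.cons_bind] using this
      · intro p hp
        simp only [Multiset.mem_cons, Multiset.notMem_zero, or_false] at hp
        rcases hp with rfl | rfl
        · exact good_single (chain_refl _) (fun G hG => Formula.noConfusion hG)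
        · exact good_single (chain_refl _) (fun G hG => Formula.noConfusion hG)
  | one =>
      refine ⟨([Formula.one], Formula.one) ::ₘ 0, by simp, ?_, ?_⟩
      · have := ProvMELLLin.onej 0
        simp only [Multiset.replicate_zero] at this
        simpa [Multiset.cons_bind] using this
      · intro p hp
        simp only [Multiset.mem_cons, Multiset.notMem_zero, or_false] at hp
        rcases hp with rfl
        exact good_single (chain_refl _) (fun G hG => Formula.noConfusion hG)
  | parr Γ A B _ ih =>
      obtain ⟨S, hmap, hlin, hgood⟩ := ih
      obtain ⟨LA, S1, rfl, hmap1⟩ := extract hmap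
      obtain ⟨LB, S2, rfl, hmap2⟩ := extract hmap1
      have hA := hgood (LA, A) (by simp)
      have hB := hgood (LB, B) (by simp)
      refine ⟨([Formula.parr (pT LA) (pT LB)], Formula.parr A B) ::ₘ S2, by simp [hmap2], ?_, ?_⟩
      · rw [Multiset.cons_bind, Multiset.cons_bind] at hlin
        have s1 := lin_fold hA.1 hlin
        rw [← Multiset.add_cons] at s1
        have s2 := lin_fold hB.1 s1
        rw [Multiset.cons_swap] at s2
        have := ProvMELLLin.parr _ _ _ s2
        simpa [Multiset.cons_bind, Multiset.singleton_add] using this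
      · intro p hp
        rcases Multiset.mem_cons.mp hp with rfl | hp
        · exact good_single (chain_parr (good_fold hA) (good_fold hB))
            (fun G hG => Formula.noConfusion hG)
        · exact hgood p (by simp [hp])
  | tens Γ Δ A B _ _ ih1 ih2 =>
      obtain ⟨S, hmapS, hlinS, hgoodS⟩ := ih1
      obtain ⟨T, hmapT, hlinT, hgoodT⟩ := ih2
      obtain ⟨LA, S1, rfl, hmap1⟩ := extract hmapS
      obtain ⟨LB, T1, rfl, hmap2⟩ := extract hmapT
      have hA := hgoodS (LA, A) (by simp)
      have hB := hgoodT (LB, B) (by simp)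
      refine ⟨([Formula.tens (pT LA) (pT LB)], Formula.tens A B) ::ₘ (S1 + T1),
        by simp [hmap1, hmap2], ?_, ?_⟩
      · rw [Multiset.cons_bind] at hlinS hlinT
        have s1 := lin_fold hA.1 hlinS
        have s2 := lin_fold hB.1 hlinT
        have := ProvMELLLin.tens _ _ _ _ s1 s2
        simpa [Multiset.cons_bind, Multiset.add_bind, Multiset.singleton_add] using this
      · intro p hp
        rcases Multiset.mem_cons.mp hp with rfl | hp
        · exact good_single (chain_tens (good_fold hA) (good_fold hB))
            (fun G hG => Formula.noConfusion hG)
        · rcases Multiset.mem_add.mp hp with hp | hp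
          · exact hgoodS p (by simp [hp])
          · exact hgoodT p (by simp [hp])
  | bot Γ _ ih =>
      obtain ⟨S, hmap, hlin, hgood⟩ := ih
      obtain ⟨n, hn⟩ := lin_addHole hlin
      refine ⟨([questN n Formula.hole], Formula.bot) ::ₘ S, by simp [hmap], ?_, ?_⟩
      · simpa [Multiset.cons_bind, Multiset.singleton_add] using hn
      · intro p hp
        rcases Multiset.mem_cons.mp hp with rfl | hp
        · exact good_single (chain_hole_bot n) (fun G hG => Formula.noConfusion hG)
        · exact hgood p hp
  | weak Γ A _ ih =>
      obtain ⟨S, hmap, hlin, hgood⟩ := ih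
      obtain ⟨n, hn⟩ := lin_addHole hlin
      refine ⟨([questN n Formula.hole], Formula.quest A) ::ₘ S, by simp [hmap], ?_, ?_⟩
      · simpa [Multiset.cons_bind, Multiset.singleton_add] using hn
      · intro p hp
        rcases Multiset.mem_cons.mp hp with rfl | hp
        · refine good_quest (by simp) ?_
          intro a ha
          simp only [List.mem_singleton] at ha
          subst ha
          exact schain_hole n A
        · exact hgood p hp
  | der Γ A _ ih =>
      obtain ⟨S, hmap, hlin, hgood⟩ := ih
      obtain ⟨LA, R, rfl, hmapR⟩ := extract hmap
      have hA := hgood (LA, A) (by simp)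
      refine ⟨(LA, Formula.quest A) ::ₘ R, by simp [hmapR], ?_, ?_⟩
      · rw [Multiset.cons_bind] at hlin ⊢
        exact hlin
      · intro p hp
        rcases Multiset.mem_cons.mp hp with rfl | hp
        · exact good_quest hA.1 (fun a ha => schain_der (hA.2.1 a ha))
        · exact hgood p (by simp [hp])
  | contr Γ A _ ih =>
      obtain ⟨S, hmap, hlin, hgood⟩ := ih
      obtain ⟨L1, S1, rfl, hmap1⟩ := extract hmap
      obtain ⟨L2, R, rfl, hmap2⟩ := extract hmap1
      have h1 := hgood (L1, Formula.quest A) (by simp)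
      have h2 := hgood (L2, Formula.quest A) (by simp)
      refine ⟨(L1 ++ L2, Formula.quest A) ::ₘ R, by simp [hmap2], ?_, ?_⟩
      · rw [Multiset.cons_bind, Multiset.cons_bind] at hlin
        rw [Multiset.cons_bind]
        show ProvMELLLin (((L1 ++ L2 : List Formula) : Multiset Formula) + _)
        rw [← Multiset.coe_add, add_assoc]
        exact hlin
      · intro p hp
        rcases Multiset.mem_cons.mp hp with rfl | hp
        · refine good_quest ?_ ?_
          · have := h1.1
            intro he
            exact this (List.append_eq_nil_iff.mp he).1
          · intro a ha
            rcases List.mem_append.mp ha with ha | ha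
            · exact h1.2.2.2 A rfl a ha
            · exact h2.2.2.2 A rfl a ha
        · exact hgood p (by simp [hp])
  | prom Γ A _ ih =>
      obtain ⟨S, hmap, hlin, hgood⟩ := ih
      obtain ⟨LA, R, rfl, hmapR⟩ := extract hmap
      have hA := hgood (LA, A) (by simp)
      refine ⟨([Formula.bang (pT LA)], Formula.bang A) ::ₘ
        R.map (fun q => (q.1.map Formula.quest, q.2)), ?_, ?_, ?_⟩
      · simp only [Multiset.map_cons, Multiset.map_map]
        rw [show ((fun p : List Formula × Formula => p.2) ∘
          (fun q : List Formula × Formula => (q.1.map Formula.quest, q.2))) = Prod.snd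
          from rfl, hmapR]
      · rw [Multiset.cons_bind] at hlin
        have s1 := lin_fold hA.1 hlin
        have := ProvMELLLin.wprom _ _ s1
        rw [Multiset.cons_bind, Multiset.bind_map]
        rw [Multiset.map_bind] at this
        simpa [Multiset.singleton_add] using this
      · intro p hp
        rcases Multiset.mem_cons.mp hp with rfl | hp
        · exact good_single (chain_bang (good_fold hA)) (fun G hG => Formula.noConfusion hG)
        · obtain ⟨q, hq, rfl⟩ := Multiset.mem_map.mp hp
          obtain ⟨qL, qD⟩ := q
          have hq2 : qD ∈ Γ.map Formula.quest := by
            rw [← hmapR]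
            exact Multiset.mem_map_of_mem _ hq
          obtain ⟨G, _, hG⟩ := Multiset.mem_map.mp hq2
          have hgq := hgood (qL, qD) (by simp [hq])
          subst hG
          refine good_quest ?_ ?_
          · simp only [ne_eq, List.map_eq_nil_iff]
            exact hgq.1
          · intro a ha
            obtain ⟨b, hb, rfl⟩ := List.mem_map.mp ha
            exact schain_quest (hgq.2.2.2 G rfl b hb)

end FineDecomp


/-- If a MELL-formula `F` is provable in MELL, then there are formulas
`F1`, `F2`, `F3` with `F1` provable in MELL^l, `F2` derivable from `F1` by deep
dereliction/digging/hole-digging, `F3` derivable from `F2` by deep weakening and deep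
bottom, and `F` derivable from `F3` by deep contraction. -/
theorem mell_fine_decomposition (F : Formula) (hF : F.isMELL) (h : ProvMELL {F}) :
    ∃ F₁ F₂ F₃ : Formula,
      ProvMELLLin {F₁} ∧
      FormDeriv DigBase F₁ F₂ ∧
      FormDeriv WeakBase F₂ F₃ ∧
      FormDeriv ContrBase F₃ F := by
  obtain ⟨S, hmap, hlin, hgood⟩ := decomp_main h
  obtain ⟨L, S', rfl, hmap'⟩ := extract (Δ := 0) (by simpa using hmap)
  rw [Multiset.map_eq_zero] at hmap'
  subst hmap'
  have hG := hgood (L, F) (by simp)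
  rw [Multiset.cons_bind, Multiset.zero_bind] at hlin
  have := lin_fold hG.1 hlin
  obtain ⟨F₂, F₃, d1, d2, d3⟩ := good_fold hG
  exact ⟨pT L, F₂, F₃, by simpa using this, d1, d2, d3⟩
end
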